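/- Fix an integer k ≥ 3 and ε ∈ (0,1). For each positive integer N, let r_k(ε,N) denote the largest cardinality of a set A ⊆ {1, 2, …, N} which does not contain any (k,ε)-AP. Then limsup_{N→∞} log r_k(ε,N) / log N ≤ 1 + log(1 − 1/k) / log(k·⌈1/(2ε)⌉), where ⌈x⌉ denotes the smallest integer greater than or equal to x. -/

import Mathlib

/-- `b 0, …, b (k-1)` is a `(k, ε)`-AP. -/
def IsKAP (k : ℕ) (ε : ℝ) (b : ℕ → ℝ) : Prop :=
  ∃ a Δ : ℝ, 0 < Δ ∧ ∀ i < k, |b i - (a + i * Δ)| ≤ ε * Δ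

/-- A set `F ⊆ ℝ` contains a `(k, ε)`-AP. -/
def ContainsKAP (F : Set ℝ) (k : ℕ) (ε : ℝ) : Prop :=
  ∃ b : ℕ → ℝ, (∀ i < k, b i ∈ F) ∧ IsKAP k ε b

/-- `rk k ε N` is the largest cardinality of a subset `A ⊆ {1, …, N}` which does not
contain any `(k, ε)`-AP. -/
noncomputable def rk (k : ℕ) (ε : ℝ) (N : ℕ) : ℕ :=
  sSup {n : ℕ | ∃ A : Finset ℕ, A.card = n ∧ A ⊆ Finset.Icc 1 N ∧
    ¬ ContainsKAP ((Nat.cast : ℕ → ℝ) '' (A : Set ℕ)) k ε}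

lemma rk_set_bdd (k : ℕ) (ε : ℝ) (N : ℕ) :
    BddAbove {n : ℕ | ∃ A : Finset ℕ, A.card = n ∧ A ⊆ Finset.Icc 1 N ∧
      ¬ ContainsKAP ((Nat.cast : ℕ → ℝ) '' (A : Set ℕ)) k ε} := by
  refine ⟨N, ?_⟩
  rintro n ⟨A, rfl, hA, -⟩
  have := Finset.card_le_card hA
  simpa [Nat.card_Icc] using this

lemma not_containsKAP_empty (k : ℕ) (hk : 0 < k) (ε : ℝ) :
    ¬ ContainsKAP ((Nat.cast : ℕ → ℝ) '' ((∅ : Finset ℕ) : Set ℕ)) k ε := by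
  rintro ⟨b, hb, -⟩
  have := hb 0 hk
  simp at this

lemma card_le_rk {k : ℕ} {ε : ℝ} {N : ℕ} {A : Finset ℕ} (hA : A ⊆ Finset.Icc 1 N)
    (hav : ¬ ContainsKAP ((Nat.cast : ℕ → ℝ) '' (A : Set ℕ)) k ε) :
    A.card ≤ rk k ε N :=
  le_csSup (rk_set_bdd k ε N) ⟨A, rfl, hA, hav⟩

lemma rk_le {k : ℕ} (hk : 0 < k) {ε : ℝ} {N B : ℕ}
    (h : ∀ A : Finset ℕ, A ⊆ Finset.Icc 1 N →
      ¬ ContainsKAP ((Nat.cast : ℕ → ℝ) '' (A : Set ℕ)) k ε → A.card ≤ B) :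
    rk k ε N ≤ B := by
  refine csSup_le ⟨0, ∅, by simp, by simp, not_containsKAP_empty k hk ε⟩ ?_
  rintro n ⟨A, rfl, hA, hav⟩
  exact h A hA hav

lemma rk_mono {k : ℕ} (hk : 0 < k) (ε : ℝ) {N N' : ℕ} (h : N ≤ N') :
    rk k ε N ≤ rk k ε N' := by
  refine rk_le hk fun A hA hav => card_le_rk (hA.trans ?_) hav
  exact Finset.Icc_subset_Icc le_rfl h

lemma rk_le_self {k : ℕ} (hk : 0 < k) (ε : ℝ) (N : ℕ) : rk k ε N ≤ N := by
  refine rk_le hk fun A hA _ => ?_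
  have := Finset.card_le_card hA
  simpa [Nat.card_Icc] using this

/-- translation invariance -/
lemma avoid_translate {k : ℕ} {ε : ℝ} {A B : Finset ℕ} {c : ℕ}
    (hB : ∀ n ∈ B, n + c ∈ A)
    (hA : ¬ ContainsKAP ((Nat.cast : ℕ → ℝ) '' (A : Set ℕ)) k ε) :
    ¬ ContainsKAP ((Nat.cast : ℕ → ℝ) '' (B : Set ℕ)) k ε := by
  rintro ⟨b, hb, a, Δ, hΔ, hap⟩
  refine hA ⟨fun i => b i + c, ?_, a + c, Δ, hΔ, ?_⟩
  · intro i hi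
    obtain ⟨n, hn, hbn⟩ := hb i hi
    exact ⟨n + c, hB n hn, by push_cast [← hbn]; ring⟩
  · intro i hi
    have := hap i hi
    have h2 : b i + ↑c - (↑a + ↑c + i * Δ) = b i - (a + i * Δ) := by ring
    rw [h2]
    exact this

/-- The key step: one level of the recursion. -/
lemma rk_step {k q s : ℕ} (hk : 3 ≤ k) (hq : 1 ≤ q) (hs : 1 ≤ s) {ε : ℝ} (hε : 0 < ε)
    (hεq : 1 ≤ 2 * ε * q) :
    rk k ε (k * q * s) ≤ (k * q - q) * rk k ε s := by
  have hk0 : 0 < k := by omega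
  refine rk_le hk0 fun A hA hav => ?_
  -- fibers
  set g : ℕ → ℕ := fun n => (n - 1) / s with hg
  have hfib : ∀ n ∈ A, g n ∈ Finset.range (k * q) := by
    intro n hn
    have h1 := (Finset.mem_Icc.mp (hA hn)).1
    have h2 := (Finset.mem_Icc.mp (hA hn)).2
    simp only [Finset.mem_range, hg]
    have he : s * (k * q) = k * q * s := by ring
    exact Nat.div_lt_of_lt_mul (by omega)
  have hcard : A.card = ∑ p ∈ Finset.range (k * q), (A.filter fun n => g n = p).card :=
    Finset.card_eq_sum_card_fiberwise hfib
  -- interval bounds for members of a fiber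
  have hmem : ∀ p, ∀ n ∈ A.filter fun n => g n = p,
      p * s + 1 ≤ n ∧ n ≤ p * s + s := by
    intro p n hn
    rw [Finset.mem_filter] at hn
    have h1 := (Finset.mem_Icc.mp (hA hn.1)).1
    have hdiv : (n - 1) / s = p := hn.2
    have hl : p * s ≤ n - 1 := by
      rw [← hdiv]; exact Nat.div_mul_le_self _ _
    have hr : n - 1 < (p + 1) * s := by
      refine Nat.lt_mul_of_div_lt ?_ (by omega)
      omega
    have he : (p + 1) * s = p * s + s := by ring
    omega
  -- each fiber, translated, avoids KAPs, so has card ≤ rk s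
  have hfibcard : ∀ p, (A.filter fun n => g n = p).card ≤ rk k ε s := by
    intro p
    set Ap := A.filter fun n => g n = p with hAp
    have hinj : Set.InjOn (fun n => n - p * s) Ap := by
      intro a ha b hb hab
      have := hmem p a ha
      have := hmem p b hb
      simp only at hab
      omega
    have hcardim : (Ap.image fun n => n - p * s).card = Ap.card :=
      Finset.card_image_of_injOn hinj
    rw [← hcardim]
    refine card_le_rk ?_ ?_
    · intro x hx
      simp only [Finset.mem_image] at hx
      obtain ⟨n, hn, rfl⟩ := hx
      have := hmem p n hn
      simp only [Finset.mem_Icc]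
      omega
    · refine avoid_translate (c := p * s) (A := A) ?_ hav
      intro x hx
      simp only [Finset.mem_image] at hx
      obtain ⟨n, hn, rfl⟩ := hx
      have := hmem p n hn
      have : n - p * s + p * s = n := by omega
      rw [this]
      exact (Finset.mem_filter.mp hn).1
  -- key: for each j < q, some fiber i*q+j is empty
  have hkey : ∀ j < q, ∃ i < k, (A.filter fun n => g n = i * q + j) = ∅ := by
    intro j hj
    by_contra hcon
    push_neg at hcon
    have hne : ∀ i, ∃ x, i < k → x ∈ A.filter fun n => g n = i * q + j := by
      intro i
      by_cases hi : i < k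
      · obtain ⟨x, hx⟩ := hcon i hi
        exact ⟨x, fun _ => hx⟩
      · exact ⟨0, fun h => absurd h hi⟩
    choose f hf using hne
    apply hav
    refine ⟨fun i => (f i : ℝ), ?_, (j * s : ℝ) + (s + 1) / 2, (q * s : ℝ), by positivity, ?_⟩
    · intro i hi
      exact ⟨f i, (Finset.mem_filter.mp (hf i hi)).1, rfl⟩
    · intro i hi
      have hm := hmem (i * q + j) _ (hf i hi)
      have hl : ((i * q + j) * s + 1 : ℝ) ≤ (f i : ℝ) := by exact_mod_cast hm.1
      have hr : (f i : ℝ) ≤ ((i * q + j) * s + s : ℝ) := by exact_mod_cast hm.2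
      have hs1 : (1 : ℝ) ≤ s := by exact_mod_cast hs
      have hq1 : (1 : ℝ) ≤ q := by exact_mod_cast hq
      have hεq' : (1 : ℝ) ≤ 2 * ε * q := hεq
      rw [abs_le]
      push_cast at hl hr ⊢
      constructor <;> nlinarith
  -- reindex the sum over range (k*q) as double sum
  have hreindex : ∑ p ∈ Finset.range (k * q), (A.filter fun n => g n = p).card =
      ∑ x ∈ Finset.range q ×ˢ Finset.range k,
        (A.filter fun n => g n = x.2 * q + x.1).card := by
    refine Finset.sum_nbij' (fun p => (p % q, p / q)) (fun x => x.2 * q + x.1) ?_ ?_ ?_ ?_ ?_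
    · intro p hp
      simp only [Finset.mem_range, Finset.mem_product] at *
      refine ⟨Nat.mod_lt _ (by omega), ?_⟩
      have he : q * k = k * q := by ring
      exact Nat.div_lt_of_lt_mul (by omega)
    · rintro ⟨j, i⟩ hx
      simp only [Finset.mem_range, Finset.mem_product] at hx ⊢
      have h1 : i * q ≤ (k - 1) * q := Nat.mul_le_mul_right _ (by omega)
      have h2 : (k - 1) * q + q = k * q := by
        have : k - 1 + 1 = k := by omega
        calc (k - 1) * q + q = (k - 1 + 1) * q := by ring
          _ = k * q := by rw [this]
      omega
    · intro p hp
      show p / q * q + p % q = p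
      exact Nat.div_add_mod' p q
    · rintro ⟨j, i⟩ hx
      simp only [Finset.mem_range, Finset.mem_product] at hx
      have h1 : (i * q + j) % q = j := by
        rw [add_comm, Nat.add_mul_mod_self_right, Nat.mod_eq_of_lt hx.1]
      have h2 : (i * q + j) / q = i := by
        rw [add_comm, Nat.add_mul_div_right _ _ (show 0 < q by omega),
          Nat.div_eq_of_lt hx.1, zero_add]
      simp [h1, h2]
    · intro p hp
      show _ = (Finset.filter (fun n => g n = p / q * q + p % q) A).card
      rw [Nat.div_add_mod']
  have hperj : ∀ j < q, ∑ i ∈ Finset.range k, (A.filter fun n => g n = i * q + j).card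
      ≤ (k - 1) * rk k ε s := by
    intro j hj
    obtain ⟨i0, hi0, hemp⟩ := hkey j hj
    have hmemi0 : i0 ∈ Finset.range k := Finset.mem_range.mpr hi0
    have h0 : (A.filter fun n => g n = i0 * q + j).card = 0 := by rw [hemp]; rfl
    rw [← Finset.add_sum_erase _ _ hmemi0, h0, zero_add]
    have hb := Finset.sum_le_card_nsmul ((Finset.range k).erase i0)
      (fun i => (A.filter fun n => g n = i * q + j).card) (rk k ε s)
      (fun i _ => hfibcard _)
    rw [Finset.card_erase_of_mem hmemi0, Finset.card_range] at hb
    simpa using hb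
  calc A.card = ∑ x ∈ Finset.range q ×ˢ Finset.range k,
        (A.filter fun n => g n = x.2 * q + x.1).card := by rw [hcard, hreindex]
    _ = ∑ j ∈ Finset.range q, ∑ i ∈ Finset.range k,
        (A.filter fun n => g n = i * q + j).card := by
          rw [Finset.sum_product]
    _ ≤ ∑ _j ∈ Finset.range q, (k - 1) * rk k ε s :=
          Finset.sum_le_sum fun j hj => hperj j (Finset.mem_range.mp hj)
    _ = q * ((k - 1) * rk k ε s) := by simp [Finset.sum_const, mul_comm]
    _ = (k * q - q) * rk k ε s := by
        have : k * q - q = (k - 1) * q := by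
          rw [Nat.sub_mul, one_mul]
        rw [this]; ring


lemma rk_pow {k q : ℕ} (hk : 3 ≤ k) (hq : 1 ≤ q) {ε : ℝ} (hε : 0 < ε)
    (hεq : 1 ≤ 2 * ε * q) : ∀ t, rk k ε ((k * q) ^ t) ≤ (k * q - q) ^ t := by
  intro t
  induction t with
  | zero => simpa using rk_le_self (show 0 < k by omega) ε 1
  | succ t ih =>
    have h1 : (k * q) ^ (t + 1) = k * q * (k * q) ^ t := by ring
    have h2 : (k * q - q) ^ (t + 1) = (k * q - q) * (k * q - q) ^ t := by ring
    rw [h1, h2]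
    calc rk k ε (k * q * (k * q) ^ t) ≤ (k * q - q) * rk k ε ((k * q) ^ t) :=
          rk_step hk hq (Nat.one_le_pow _ _ (by positivity)) hε hεq
      _ ≤ (k * q - q) * (k * q - q) ^ t := Nat.mul_le_mul_left _ ih

theorem stmt_15 (k : ℕ) (hk : 3 ≤ k) (ε : ℝ) (hε : ε ∈ Set.Ioo (0 : ℝ) 1) :
    Filter.limsup (fun N : ℕ => Real.log (rk k ε N) / Real.log N) Filter.atTop ≤
      1 + Real.log (1 - 1 / k) / Real.log (k * ⌈1 / (2 * ε)⌉₊) := by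
  obtain ⟨hε0, hε1⟩ := hε
  set q : ℕ := ⌈1 / (2 * ε)⌉₊ with hqdef
  have hq1 : 1 ≤ q := Nat.one_le_iff_ne_zero.mpr
    ((Nat.ceil_pos.mpr (by positivity : (0:ℝ) < 1 / (2 * ε))).ne')
  have hεq : 1 ≤ 2 * ε * q := by
    have h := Nat.le_ceil (1 / (2 * ε))
    rw [div_le_iff₀ (by positivity)] at h
    rw [← hqdef] at h
    nlinarith [h]
  set m : ℕ := k * q with hmdef
  set M : ℕ := k * q - q with hMdef
  have hm3 : 3 ≤ m := le_trans hk (Nat.le_mul_of_pos_right k (by omega))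
  have hM2 : 2 ≤ M := by
    have h3 : 3 * q ≤ k * q := Nat.mul_le_mul_right q hk
    omega
  have hm1 : (1:ℝ) < (m:ℝ) := by exact_mod_cast (show 1 < m by omega)
  have hlogm : 0 < Real.log m := Real.log_pos hm1
  have hlogM : 0 ≤ Real.log M :=
    Real.log_nonneg (by exact_mod_cast (show 1 ≤ M by omega))
  set T : ℝ := Real.log M / Real.log m with hTdef
  have hT0 : 0 ≤ T := div_nonneg hlogM hlogm.le
  have hk0R : (0:ℝ) < (k:ℝ) := by exact_mod_cast (show 0 < k by omega)
  have h1k : (0:ℝ) < 1 - 1/(k:ℝ) := by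
    have : (1:ℝ)/(k:ℝ) < 1 := by
      rw [div_lt_one hk0R]
      exact_mod_cast (show 1 < k by omega)
    linarith
  have hMm : ((M:ℝ)) = (1 - 1/(k:ℝ)) * (m:ℝ) := by
    have hqm : q ≤ k * q := Nat.le_mul_of_pos_left q (by omega)
    rw [hMdef, hmdef]
    push_cast [Nat.cast_sub hqm]
    field_simp
  have harg : (k:ℝ) * (q:ℝ) = (m:ℝ) := by rw [hmdef]; push_cast; ring
  rw [harg]
  have hRHS : 1 + Real.log (1 - 1/(k:ℝ)) / Real.log m = T := by
    have hlM : Real.log (M:ℝ) = Real.log (1-1/(k:ℝ)) + Real.log m := by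
      rw [hMm, Real.log_mul h1k.ne' (by positivity)]
    rw [hTdef, hlM]
    field_simp
    ring
  rw [hRHS]
  refine le_of_forall_pos_le_add fun δ hδ => ?_
  refine Filter.limsup_le_of_le ?_ ?_
  · exact Filter.IsCoboundedUnder.of_frequently_ge (a := 0)
      (Filter.Frequently.of_forall fun N =>
        div_nonneg (Real.log_natCast_nonneg _) (Real.log_natCast_nonneg _))
  · set t0 : ℕ := ⌈T / δ⌉₊ + 1 with ht0def
    refine Filter.eventually_atTop.mpr ⟨m ^ t0, fun N hN => ?_⟩
    set t : ℕ := Nat.log m N with htdef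
    have hN1 : N ≠ 0 := by
      have : 1 ≤ m ^ t0 := Nat.one_le_pow _ _ (by omega)
      omega
    have hlow : m ^ t ≤ N := Nat.pow_log_le_self m hN1
    have hhigh : N < m ^ (t + 1) := Nat.lt_pow_succ_log_self (by omega) N
    have ht0t : t0 ≤ t := by
      have h := Nat.log_mono_right (b := m) hN
      rwa [Nat.log_pow (show 1 < m by omega)] at h
    have ht1 : 1 ≤ t := by omega
    have htR : (1:ℝ) ≤ (t:ℝ) := by exact_mod_cast ht1
    have hrk : rk k ε N ≤ M ^ (t+1) :=
      le_trans (rk_mono (show 0 < k by omega) ε hhigh.le) (rk_pow hk hq1 hε0 hεq (t+1))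
    have hnum : Real.log (rk k ε N) ≤ ((t:ℝ)+1) * Real.log M := by
      rcases Nat.eq_zero_or_pos (rk k ε N) with h0 | hpos
      · rw [h0]
        simpa using mul_nonneg (by positivity : (0:ℝ) ≤ (t:ℝ)+1) hlogM
      · have h := Real.log_le_log (by exact_mod_cast hpos : (0:ℝ) < (rk k ε N : ℝ))
          (show ((rk k ε N : ℕ):ℝ) ≤ ((M:ℝ))^(t+1) by exact_mod_cast hrk)
        rwa [Real.log_pow, Nat.cast_add, Nat.cast_one] at h
    have hden : (t:ℝ) * Real.log m ≤ Real.log N := by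
      have h := Real.log_le_log (by positivity : (0:ℝ) < (m:ℝ)^t)
        (show ((m:ℝ))^t ≤ (N:ℝ) by exact_mod_cast hlow)
      rwa [Real.log_pow] at h
    have hdpos : 0 < (t:ℝ) * Real.log m := mul_pos (by linarith) hlogm
    have hnum0 : 0 ≤ Real.log (rk k ε N) := Real.log_natCast_nonneg _
    calc Real.log (rk k ε N) / Real.log N
        ≤ Real.log (rk k ε N) / ((t:ℝ) * Real.log m) :=
          div_le_div_of_nonneg_left hnum0 hdpos hden
      _ ≤ (((t:ℝ)+1) * Real.log M) / ((t:ℝ) * Real.log m) := by gcongr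
      _ = T + T / t := by
          rw [hTdef]
          field_simp
      _ ≤ T + δ := by
          have hTt : T / t ≤ δ := by
            rw [div_le_iff₀ (by linarith : (0:ℝ) < (t:ℝ))]
            have h1 : T / δ ≤ (⌈T/δ⌉₊ : ℝ) := Nat.le_ceil _
            have h2 : ((⌈T/δ⌉₊ : ℕ) : ℝ) + 1 ≤ (t:ℝ) := by exact_mod_cast ht0t
            have h3 : T ≤ δ * (T/δ) := by
              rw [mul_div_cancel₀ _ hδ.ne']
            nlinarith
          linarith
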